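/- In the Erlang-A setup with abandonment rate α ≥ 0 (where, if α = 0, it is additionally assumed that R < n), let f : ℝ → ℝ satisfy |f(x)| ≤ C(1 + |x|)³ for some C > 0, and set x_k := δ(k − x(∞)) for k ≥ 0. Then the basic adjoint relationship holds: the series Σ_{k≥0} π_k·[λ·(f(x_{k+1}) − f(x_k)) + d(k)·(f(x_{k−1}) − f(x_k))] converges absolutely and equals 0 (the k = 0 term has d(0) = 0). -/

import Mathlib

open MeasureTheory Set

lemma aux_geo_summable {r : ℝ} (h0 : 0 < r) (h1 : r < 1) :
    Summable fun n : ℕ => ((n : ℝ) + 1) ^ 4 * r ^ n := by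
  have h : Summable fun n : ℕ => (n : ℝ) ^ 4 * r ^ n :=
    summable_pow_mul_geometric_of_norm_lt_one 4
      (by rw [Real.norm_eq_abs, abs_of_pos h0]; exact h1)
  have h2 : Summable fun n : ℕ => ((n + 1 : ℕ) : ℝ) ^ 4 * r ^ (n + 1) :=
    (summable_nat_add_iff 1).2 h
  refine (h2.mul_left r⁻¹).congr fun n => ?_
  have hr : r ≠ 0 := ne_of_gt h0
  push_cast
  rw [pow_succ]
  field_simp
  ring

set_option maxHeartbeats 1000000 in
theorem erlangA_basic_adjoint_relationship
    (lam mu alpha : ℝ) (n : ℕ)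
    (hlam : 0 < lam) (hmu : 0 < mu) (halpha : 0 ≤ alpha) (hn : 1 ≤ n)
    (R δ xinf : ℝ)
    (hR : R = lam / mu)
    (halpha0 : alpha = 0 → R < (n : ℝ))
    (hδ : δ = 1 / Real.sqrt R)
    (hxinf : xinf = if 0 < alpha ∧ (n : ℝ) ≤ R
                    then (n : ℝ) + (lam - (n : ℝ) * mu) / alpha else R)
    (d : ℕ → ℝ)
    (hd : ∀ k : ℕ, d k = mu * min (k : ℝ) (n : ℝ) + alpha * max ((k : ℝ) - (n : ℝ)) 0)
    (pi : ℕ → ℝ)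
    (hpi_nonneg : ∀ k, 0 ≤ pi k)
    (hpi_sum : (∑' k : ℕ, pi k) = 1)
    (hflow : ∀ k : ℕ, lam * pi k = d (k + 1) * pi (k + 1))
    (f : ℝ → ℝ) (Cf : ℝ) (hCf : 0 < Cf)
    (hgrowth : ∀ x : ℝ, |f x| ≤ Cf * (1 + |x|) ^ 3)
    (x : ℕ → ℝ) (hx : ∀ k : ℕ, x k = δ * ((k : ℝ) - xinf)) :
    (Summable fun k : ℕ =>
      |pi k * (lam * (f (x (k + 1)) - f (x k)) + d k * (f (x (k - 1)) - f (x k)))|) ∧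
    (∑' k : ℕ,
      pi k * (lam * (f (x (k + 1)) - f (x k)) + d k * (f (x (k - 1)) - f (x k)))) = 0 := by
  -- names for the summand and telescoping boundary term
  set a : ℕ → ℝ := fun k =>
    pi k * (lam * (f (x (k + 1)) - f (x k)) + d k * (f (x (k - 1)) - f (x k))) with ha
  set b : ℕ → ℝ := fun k => d k * pi k * (f (x k) - f (x (k - 1))) with hb
  -- positivity of δ
  have hRpos : 0 < R := by rw [hR]; positivity
  have hδpos : 0 < δ := by rw [hδ]; positivity
  have hnpos : (0 : ℝ) < n := by exact_mod_cast Nat.lt_of_lt_of_le Nat.zero_lt_one hn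
  -- d is nonnegative and at most linear
  have hd_nonneg : ∀ k : ℕ, 0 ≤ d k := by
    intro k; rw [hd k]
    have h1 : (0:ℝ) ≤ min (k:ℝ) n := le_min (Nat.cast_nonneg k) (le_of_lt hnpos)
    have h2 : (0:ℝ) ≤ max ((k:ℝ) - n) 0 := le_max_right _ _
    have := hmu.le
    nlinarith
  have hd_le : ∀ k : ℕ, d k ≤ (mu + alpha) * (1 + (k:ℝ)) := by
    intro k; rw [hd k]
    have h1 : min (k:ℝ) n ≤ (k:ℝ) := min_le_left _ _
    have h2 : max ((k:ℝ) - n) 0 ≤ (k:ℝ) := by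
      apply max_le (by linarith) (Nat.cast_nonneg k)
    have hk : (0:ℝ) ≤ (k:ℝ) := Nat.cast_nonneg k
    nlinarith
  -- growth bound on f ∘ x
  set A : ℝ := 1 + δ * (1 + |xinf|) with hA
  have hApos : 0 < A := by have := abs_nonneg xinf; rw [hA]; nlinarith
  have hxb : ∀ k : ℕ, 1 + |x k| ≤ A * (1 + (k:ℝ)) := by
    intro k
    rw [hx k, abs_mul, abs_of_pos hδpos]
    have h1 : |(k:ℝ) - xinf| ≤ (k:ℝ) + |xinf| := by
      calc |(k:ℝ) - xinf| ≤ |(k:ℝ)| + |xinf| := abs_sub _ _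
        _ = (k:ℝ) + |xinf| := by rw [abs_of_nonneg (Nat.cast_nonneg k)]
    have hk : (0:ℝ) ≤ (k:ℝ) := Nat.cast_nonneg k
    have ha0 := abs_nonneg xinf
    rw [hA]
    nlinarith [mul_le_mul_of_nonneg_left h1 hδpos.le, mul_nonneg hδpos.le hk,
      mul_nonneg (mul_nonneg hδpos.le hk) ha0]
  have hfb : ∀ k j : ℕ, j ≤ k + 1 → |f (x j)| ≤ Cf * ((2*A) * (1 + (k:ℝ)))^3 := by
    intro k j hj
    have hjk : (j:ℝ) ≤ (k:ℝ) + 1 := by exact_mod_cast hj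
    have h1 : 1 + |x j| ≤ (2*A) * (1 + (k:ℝ)) := by
      have := hxb j
      have hk : (0:ℝ) ≤ (k:ℝ) := Nat.cast_nonneg k
      nlinarith
    calc |f (x j)| ≤ Cf * (1 + |x j|)^3 := hgrowth _
      _ ≤ Cf * ((2*A) * (1 + (k:ℝ)))^3 := by
          apply mul_le_mul_of_nonneg_left _ hCf.le
          exact pow_le_pow_left₀ (by positivity) h1 3
  -- uniform polynomial bounds on a and b
  set D : ℝ := 2 * Cf * (2*A)^3 * (lam + mu + alpha) with hD
  have hDpos : 0 < D := by rw [hD]; positivity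
  have hMk : ∀ k : ℕ, (0:ℝ) ≤ Cf * ((2*A) * (1 + (k:ℝ)))^3 := by
    intro k; positivity
  have habound : ∀ k : ℕ, |a k| ≤ D * (pi k * (1 + (k:ℝ))^4) := by
    intro k
    set M : ℝ := Cf * ((2*A) * (1 + (k:ℝ)))^3 with hM
    clear_value M
    have h1 := hfb k (k+1) (le_refl _)
    have h2 := hfb k k (Nat.le_succ k)
    have h3 := hfb k (k-1) (le_trans (Nat.sub_le k 1) (Nat.le_succ k))
    have hM0 : 0 ≤ M := hM ▸ hMk k
    have habs : |lam * (f (x (k + 1)) - f (x k)) + d k * (f (x (k - 1)) - f (x k))|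
        ≤ lam * (2*M) + d k * (2*M) := by
      calc |lam * (f (x (k + 1)) - f (x k)) + d k * (f (x (k - 1)) - f (x k))|
          ≤ |lam * (f (x (k + 1)) - f (x k))| + |d k * (f (x (k - 1)) - f (x k))| :=
            abs_add_le _ _
        _ = lam * |f (x (k + 1)) - f (x k)| + d k * |f (x (k - 1)) - f (x k)| := by
            rw [abs_mul, abs_mul, abs_of_pos hlam, abs_of_nonneg (hd_nonneg k)]
        _ ≤ lam * (2*M) + d k * (2*M) := by
            have e1 : |f (x (k + 1)) - f (x k)| ≤ 2*M := by
              calc |f (x (k + 1)) - f (x k)| ≤ |f (x (k+1))| + |f (x k)| := abs_sub _ _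
                _ ≤ 2*M := by rw [hM] at *; linarith
            have e2 : |f (x (k - 1)) - f (x k)| ≤ 2*M := by
              calc |f (x (k - 1)) - f (x k)| ≤ |f (x (k-1))| + |f (x k)| := abs_sub _ _
                _ ≤ 2*M := by rw [hM] at *; linarith
            have := hd_nonneg k
            nlinarith
    have hk : (0:ℝ) ≤ (k:ℝ) := Nat.cast_nonneg k
    calc |a k| = pi k * |lam * (f (x (k + 1)) - f (x k)) + d k * (f (x (k - 1)) - f (x k))| := by
          rw [ha]; rw [abs_mul, abs_of_nonneg (hpi_nonneg k)]
      _ ≤ pi k * (lam * (2*M) + d k * (2*M)) :=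
          mul_le_mul_of_nonneg_left habs (hpi_nonneg k)
      _ ≤ pi k * ((lam + mu + alpha) * (1 + (k:ℝ)) * (2*M)) := by
          refine mul_le_mul_of_nonneg_left ?_ (hpi_nonneg k)
          nlinarith [mul_le_mul_of_nonneg_right (hd_le k) (by linarith : (0:ℝ) ≤ 2*M),
            mul_nonneg (mul_nonneg hlam.le hk) hM0]
      _ = D * (pi k * (1 + (k:ℝ))^4) := by rw [hD, hM]; ring
  have hbbound : ∀ k : ℕ, |b k| ≤ D * (pi k * (1 + (k:ℝ))^4) := by
    intro k
    set M : ℝ := Cf * ((2*A) * (1 + (k:ℝ)))^3 with hM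
    clear_value M
    have h2 := hfb k k (Nat.le_succ k)
    have h3 := hfb k (k-1) (le_trans (Nat.sub_le k 1) (Nat.le_succ k))
    have hM0 : 0 ≤ M := hM ▸ hMk k
    have e2 : |f (x k) - f (x (k - 1))| ≤ 2*M := by
      calc |f (x k) - f (x (k - 1))| ≤ |f (x k)| + |f (x (k-1))| := abs_sub _ _
        _ ≤ 2*M := by rw [hM] at *; linarith
    have hk : (0:ℝ) ≤ (k:ℝ) := Nat.cast_nonneg k
    calc |b k| = d k * pi k * |f (x k) - f (x (k - 1))| := by
          rw [hb]
          rw [abs_mul, abs_mul, abs_of_nonneg (hd_nonneg k), abs_of_nonneg (hpi_nonneg k)]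
      _ ≤ d k * pi k * (2*M) := by
          apply mul_le_mul_of_nonneg_left e2 (mul_nonneg (hd_nonneg k) (hpi_nonneg k))
      _ ≤ ((mu + alpha) * (1 + (k:ℝ))) * pi k * (2*M) := by
          have := hd_le k
          have hpk := hpi_nonneg k
          nlinarith [mul_nonneg hpk (by linarith : (0:ℝ) ≤ 2*M)]
      _ = (2 * Cf * (2*A)^3 * (mu + alpha)) * (pi k * (1 + (k:ℝ))^4) := by
          rw [hM]; ring
      _ ≤ D * (pi k * (1 + (k:ℝ))^4) := by
          have hC0 : (0:ℝ) ≤ 2 * Cf * (2*A)^3 := by positivity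
          have hcoef : 2 * Cf * (2*A)^3 * (mu + alpha) ≤ D := by
            rw [hD]; nlinarith [mul_nonneg hC0 hlam.le]
          have hnn : (0:ℝ) ≤ pi k * (1 + (k:ℝ))^4 :=
            mul_nonneg (hpi_nonneg k) (by positivity)
          exact mul_le_mul_of_nonneg_right hcoef hnn
  -- geometric decay of pi
  obtain ⟨m, r, hr0, hr1, hge⟩ :
      ∃ m : ℕ, ∃ r : ℝ, 0 < r ∧ r < 1 ∧ ∀ k, m ≤ k → lam ≤ r * d (k + 1) := by
    rcases eq_or_lt_of_le halpha with h0 | hpos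
    · -- alpha = 0
      have hα : alpha = 0 := h0.symm
      have hRn : R < n := halpha0 hα
      have hlt : lam < (n:ℝ) * mu := by
        rw [hR] at hRn
        calc lam = (lam / mu) * mu := by field_simp
          _ < (n:ℝ) * mu := by exact mul_lt_mul_of_pos_right hRn hmu
      refine ⟨n, lam / ((n:ℝ) * mu), by positivity, ?_, ?_⟩
      · rw [div_lt_one (by positivity)]; exact hlt
      · intro k hk
        have hkn : (n:ℝ) ≤ (k:ℝ) + 1 := by
          have : (n:ℝ) ≤ (k:ℝ) := by exact_mod_cast hk
          linarith
        have hdk : d (k+1) = (n:ℝ) * mu := by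
          rw [hd, hα]
          push_cast
          rw [min_eq_right hkn]
          ring
        rw [hdk]
        field_simp
        norm_num
    · -- alpha > 0
      refine ⟨n + Nat.ceil (2 * lam / alpha), 1/2, by norm_num, by norm_num, ?_⟩
      intro k hk
      have hdk : 2 * lam ≤ d (k+1) := by
        have hc : 2 * lam / alpha ≤ (Nat.ceil (2*lam/alpha) : ℝ) := Nat.le_ceil _
        have hk' : (n:ℝ) + (Nat.ceil (2*lam/alpha) : ℝ) ≤ (k:ℝ) := by exact_mod_cast hk
        have h1 : 2 * lam ≤ alpha * ((k:ℝ) + 1 - n) := by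
          have h2 : 2 * lam / alpha ≤ (k:ℝ) + 1 - n := by linarith
          calc 2 * lam = alpha * (2 * lam / alpha) := by field_simp
            _ ≤ alpha * ((k:ℝ) + 1 - n) := mul_le_mul_of_nonneg_left h2 halpha
        have h3 : alpha * ((k:ℝ) + 1 - n) ≤ alpha * max ((k:ℝ) + 1 - n) 0 :=
          mul_le_mul_of_nonneg_left (le_max_left _ _) halpha
        have h4 : (0:ℝ) ≤ mu * min ((k:ℝ)+1) n := by
          have : (0:ℝ) ≤ min ((k:ℝ)+1) n := le_min (by positivity) hnpos.le
          positivity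
        rw [hd]
        push_cast
        linarith
      linarith
  -- tail geometric bound on pi
  have hπstep : ∀ k, m ≤ k → pi (k+1) ≤ r * pi k := by
    intro k hk
    have h := hflow k
    have hge' := hge k hk
    have hdpos : 0 < d (k+1) := by nlinarith
    have : d (k+1) * pi (k+1) ≤ d (k+1) * (r * pi k) := by
      nlinarith [hpi_nonneg k]
    exact le_of_mul_le_mul_left this hdpos
  have hπgeo : ∀ j : ℕ, pi (m + j) ≤ pi m * r ^ j := by
    intro j
    induction j with
    | zero => simp
    | succ j ih =>
      have h1 : pi (m + j + 1) ≤ r * pi (m + j) := hπstep (m + j) (Nat.le_add_right m j)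
      have h2 : r * pi (m + j) ≤ r * (pi m * r ^ j) := mul_le_mul_of_nonneg_left ih hr0.le
      calc pi (m + (j+1)) = pi (m + j + 1) := by ring_nf
        _ ≤ r * (pi m * r ^ j) := le_trans h1 h2
        _ = pi m * r ^ (j+1) := by rw [pow_succ]; ring
  set K : ℝ := D * pi m * (1 + (m:ℝ))^4 with hK
  have htail : ∀ j : ℕ, D * (pi (j + m) * (1 + ((j + m : ℕ):ℝ))^4)
      ≤ K * (((j:ℝ) + 1)^4 * r ^ j) := by
    intro j
    have h1 : pi (j + m) ≤ pi m * r ^ j := by rw [add_comm]; exact hπgeo j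
    have h2 : (1 + ((j + m : ℕ):ℝ))^4 ≤ ((1 + (m:ℝ)) * ((j:ℝ) + 1))^4 := by
      apply pow_le_pow_left₀ (by positivity)
      push_cast
      nlinarith [Nat.cast_nonneg (α := ℝ) j, Nat.cast_nonneg (α := ℝ) m]
    have h3 : pi (j + m) * (1 + ((j + m : ℕ):ℝ))^4
        ≤ (pi m * r ^ j) * ((1 + (m:ℝ)) * ((j:ℝ) + 1))^4 := by
      exact mul_le_mul h1 h2 (by positivity) (mul_nonneg (hpi_nonneg m) (by positivity))
    calc D * (pi (j + m) * (1 + ((j + m : ℕ):ℝ))^4)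
        ≤ D * ((pi m * r ^ j) * ((1 + (m:ℝ)) * ((j:ℝ) + 1))^4) :=
          mul_le_mul_of_nonneg_left h3 hDpos.le
      _ = K * (((j:ℝ) + 1)^4 * r ^ j) := by rw [hK]; ring
  -- summability
  have hsum_geo : Summable fun j : ℕ => K * (((j:ℝ) + 1)^4 * r ^ j) :=
    (aux_geo_summable hr0 hr1).mul_left K
  have hsum_abs : Summable fun k : ℕ => |a k| := by
    apply (summable_nat_add_iff m).1
    apply Summable.of_nonneg_of_le (fun j => abs_nonneg _) _ hsum_geo
    intro j
    exact le_trans (habound (j + m)) (htail j)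
  have hsum_a : Summable a := summable_abs_iff.mp hsum_abs
  -- telescoping
  have hb0 : b 0 = 0 := by rw [hb]; simp
  have hstep : ∀ k : ℕ, a k = b (k+1) - b k := by
    intro k
    rw [ha, hb]
    simp only [Nat.add_sub_cancel]
    rw [← hflow k]
    ring
  have hpartial : ∀ N : ℕ, (∑ k ∈ Finset.range N, a k) = b N := by
    intro N
    calc (∑ k ∈ Finset.range N, a k) = ∑ k ∈ Finset.range N, (b (k+1) - b k) :=
        Finset.sum_congr rfl (fun k _ => hstep k)
      _ = b N - b 0 := Finset.sum_range_sub b N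
      _ = b N := by rw [hb0]; ring
  -- b tends to zero
  have hbtend : Filter.Tendsto b Filter.atTop (nhds 0) := by
    rw [← Filter.tendsto_add_atTop_iff_nat m]
    refine squeeze_zero_norm (fun j => ?_) hsum_geo.tendsto_atTop_zero
    rw [Real.norm_eq_abs]
    exact le_trans (hbbound (j + m)) (htail j)
  -- conclude
  refine ⟨hsum_abs, ?_⟩
  have hhs := hsum_a.hasSum.tendsto_sum_nat
  have h2 : Filter.Tendsto b Filter.atTop (nhds (∑' k, a k)) := by
    apply hhs.congr
    intro N
    exact hpartial N
  exact tendsto_nhds_unique h2 hbtend
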